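/- arXiv:2604.23223 — 2 statements merged into one kernel-verified Lean document; each statement's English description precedes it below -/
import Mathlib

section
/- Define v_{k,n} := sum over i from n+1 to n+k of [ -C(n-i, i) * C(n+k+i, 2i+1) + C(n-i, i-1) * C(n+k+i, 2i) ] with generalized binomial coefficients. Then for every positive integer k and every integer h ≤ -1, v_{k, h} = 0. -/
open Finset

/-- Generalized binomial coefficient: classical for nonnegative upper index,
`(-1)^k * C(k-m-1, k)` for negative upper index, and `0` for negative lower index. -/
def gchoose (m k : ℤ) : ℤ :=
  if k < 0 then 0
  else if m < 0 then (-1) ^ k.toNat * ((k - m - 1).toNat.choose k.toNat : ℤ)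
  else (m.toNat.choose k.toNat : ℤ)

/-- The double sequence `v_{k,n}`. -/
noncomputable def vseq (k n : ℤ) : ℤ :=
  ∑ i ∈ Finset.Icc (n + 1) (n + k),
    (-(gchoose (n - i) i * gchoose (n + k + i) (2 * i + 1))
      + gchoose (n - i) (i - 1) * gchoose (n + k + i) (2 * i))

lemma gchoose_neg_right {m k : ℤ} (h : k < 0) : gchoose m k = 0 := by
  simp [gchoose, h]

lemma gchoose_zero_right (m : ℤ) : gchoose m 0 = 1 := by
  unfold gchoose
  rw [if_neg (by omega)]
  split_ifs <;> simp

lemma gchoose_eq_zero_of_lt {m k : ℤ} (h0 : 0 ≤ m) (h : m < k) : gchoose m k = 0 := by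
  unfold gchoose
  rw [if_neg (by omega), if_neg (by omega)]
  norm_cast
  exact Nat.choose_eq_zero_of_lt (by omega)

/-- Pascal's rule for generalized binomial coefficients. -/
lemma gchoose_pascal (m k : ℤ) :
    gchoose m k = gchoose (m - 1) (k - 1) + gchoose (m - 1) k := by
  rcases lt_trichotomy k 0 with hk | hk | hk
  · rw [gchoose_neg_right hk, gchoose_neg_right (by omega), gchoose_neg_right hk]
    ring
  · subst hk
    rw [gchoose_zero_right, gchoose_zero_right, gchoose_neg_right (by norm_num)]
    ring
  · -- k ≥ 1
    obtain ⟨b, rfl⟩ : ∃ b : ℕ, k = (b : ℤ) + 1 := ⟨(k - 1).toNat, by omega⟩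
    rcases lt_trichotomy m 0 with hm | hm | hm
    · -- m < 0
      simp only [gchoose, if_neg (show ¬((b:ℤ)+1 < 0) by omega),
        if_neg (show ¬((b:ℤ)+1-1 < 0) by omega), if_pos hm,
        if_pos (show m - 1 < 0 by omega)]
      have h1 : ((b : ℤ) + 1).toNat = b + 1 := by omega
      have h2 : ((b : ℤ) + 1 - 1).toNat = b := by omega
      have h3 : ((b : ℤ) + 1 - 1 - (m - 1) - 1).toNat = ((b : ℤ) + 1 - m - 1).toNat := by omega
      have h4 : ((b : ℤ) + 1 - (m - 1) - 1).toNat = ((b : ℤ) + 1 - m - 1).toNat + 1 := by omega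
      rw [h1, h2, h3, h4, Nat.choose_succ_succ ((b:ℤ)+1-m-1).toNat b]
      push_cast
      ring
    · subst hm
      simp only [gchoose, if_neg (show ¬((b:ℤ)+1 < 0) by omega),
        if_neg (show ¬((0:ℤ) < 0) by omega), if_neg (show ¬((b:ℤ)+1-1 < 0) by omega),
        if_pos (show (0:ℤ)-1 < 0 by omega)]
      have h1 : ((b : ℤ) + 1).toNat = b + 1 := by omega
      have h2 : ((b : ℤ) + 1 - 1).toNat = b := by omega
      have h3 : ((0:ℤ)).toNat = 0 := rfl
      have h4 : ((b : ℤ) + 1 - 1 - (0 - 1) - 1).toNat = b := by omega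
      have h5 : ((b : ℤ) + 1 - (0 - 1) - 1).toNat = b + 1 := by omega
      rw [h1, h2, h3, h4, h5]
      simp [Nat.choose_self, Nat.choose_eq_zero_of_lt (Nat.lt_succ_self b), pow_succ]
    · -- m ≥ 1
      simp only [gchoose, if_neg (show ¬((b:ℤ)+1 < 0) by omega),
        if_neg (show ¬((b:ℤ)+1-1 < 0) by omega), if_neg (show ¬(m < 0) by omega),
        if_neg (show ¬(m - 1 < 0) by omega)]
      have h1 : m.toNat = (m - 1).toNat + 1 := by omega
      have h2 : ((b : ℤ) + 1).toNat = b + 1 := by omega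
      have h3 : ((b : ℤ) + 1 - 1).toNat = b := by omega
      rw [h1, h2, h3, Nat.choose_succ_succ]
      push_cast
      ring

/-- Telescoping sums over integer intervals. -/
lemma telescope (f : ℤ → ℤ) (a : ℤ) (m : ℕ) :
    ∑ i ∈ Finset.Icc a (a + (m : ℤ) - 1), (f i - f (i + 1)) = f a - f (a + (m : ℤ)) := by
  induction m with
  | zero => simp
  | succ d ih =>
    have hins : Finset.Icc a (a + ((d : ℤ) + 1) - 1) =
        insert (a + (d : ℤ)) (Finset.Icc a (a + (d : ℤ) - 1)) := by
      ext x
      simp only [Finset.mem_Icc, Finset.mem_insert]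
      omega
    push_cast
    push_cast at ih
    rw [hins, Finset.sum_insert (by intro hmem; simp only [Finset.mem_Icc] at hmem; omega), ih,
      show a + ((d : ℤ) + 1) = a + (d : ℤ) + 1 by ring]
    ring


lemma gchoose_self {m : ℤ} (h : 0 ≤ m) : gchoose m m = 1 := by
  unfold gchoose
  rw [if_neg (by omega), if_neg (by omega)]
  simp [Nat.choose_self]

/-- The pointwise telescoping identity. -/
lemma key (n k i : ℤ) :
    (-(gchoose (n - i) i * gchoose (n + k + i) (2 * i + 1))
        + gchoose (n - i) (i - 1) * gchoose (n + k + i) (2 * i))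
      + (-(gchoose (n - 1 - i) i * gchoose (n - 1 + k + i) (2 * i + 1))
        + gchoose (n - 1 - i) (i - 1) * gchoose (n - 1 + k + i) (2 * i))
      - (-(gchoose (n - i) i * gchoose (n + (k - 1) + i) (2 * i + 1))
        + gchoose (n - i) (i - 1) * gchoose (n + (k - 1) + i) (2 * i))
    = (gchoose (n - i) (i - 1) * gchoose (n + k + i - 1) (2 * i - 1)
        - gchoose (n - (i + 1)) (i + 1 - 1) * gchoose (n + k + (i + 1) - 1) (2 * (i + 1) - 1)) := by
  have a1 : n - 1 + k + i = n + k + i - 1 := by ring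
  have a2 : n + (k - 1) + i = n + k + i - 1 := by ring
  have a3 : n - (i + 1) = n - 1 - i := by ring
  have a4 : n + k + (i + 1) - 1 = n + k + i := by ring
  have a5 : 2 * (i + 1) - 1 = 2 * i + 1 := by ring
  have a6 : i + 1 - 1 = i := by ring
  rw [a1, a2, a3, a4, a5, a6]
  have e1 : gchoose (n + k + i) (2 * i + 1)
      = gchoose (n + k + i - 1) (2 * i) + gchoose (n + k + i - 1) (2 * i + 1) := by
    have := gchoose_pascal (n + k + i) (2 * i + 1)
    rw [show 2 * i + 1 - 1 = 2 * i by ring] at this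
    exact this
  have e2 : gchoose (n + k + i) (2 * i)
      = gchoose (n + k + i - 1) (2 * i - 1) + gchoose (n + k + i - 1) (2 * i) :=
    gchoose_pascal (n + k + i) (2 * i)
  have e3 : gchoose (n - i) i = gchoose (n - 1 - i) (i - 1) + gchoose (n - 1 - i) i := by
    have := gchoose_pascal (n - i) i
    rw [show n - i - 1 = n - 1 - i by ring] at this
    exact this
  have e4 : gchoose (n - i) (i - 1)
      = gchoose (n - 1 - i) (i - 1 - 1) + gchoose (n - 1 - i) (i - 1) := by
    have := gchoose_pascal (n - i) (i - 1)
    rw [show n - i - 1 = n - 1 - i by ring] at this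
    exact this
  rw [e1, e2, e3, e4]
  ring

lemma vseq_zero_of_neg (k n : ℤ) (h : n + k < 0) : vseq k n = 0 := by
  unfold vseq
  apply Finset.sum_eq_zero
  intro i hi
  simp only [Finset.mem_Icc] at hi
  rw [gchoose_neg_right (show i < 0 by omega), gchoose_neg_right (show i - 1 < 0 by omega)]
  ring

lemma vseq_zero_left (n : ℤ) : vseq 0 n = 0 := by
  unfold vseq
  rw [Finset.Icc_eq_empty (by omega), Finset.sum_empty]

def Dfun (n k : ℤ) : ℤ → ℤ := fun j =>
  gchoose (n - j) (j - 1) * gchoose (n + k + j - 1) (2 * j - 1)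

lemma boundary_top (n k : ℤ) :
    -(gchoose (n - (n + k)) (n + k) * gchoose (n + k + (n + k)) (2 * (n + k) + 1))
      + gchoose (n - (n + k)) (n + k - 1) * gchoose (n + k + (n + k)) (2 * (n + k))
    = Dfun n k (n + k) := by
  show _ = gchoose (n - (n + k)) (n + k - 1) * gchoose (n + k + (n + k) - 1) (2 * (n + k) - 1)
  rcases lt_trichotomy (n + k) 0 with hN | hN | hN
  · rw [gchoose_neg_right (show n + k < 0 from hN),
      gchoose_neg_right (show n + k - 1 < 0 by omega)]
    ring
  · have t1 : gchoose (n + k + (n + k)) (2 * (n + k) + 1) = 0 := by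
      rw [show n + k + (n + k) = 0 by omega, show 2 * (n + k) + 1 = 1 by omega]
      exact gchoose_eq_zero_of_lt le_rfl one_pos
    rw [t1, gchoose_neg_right (show n + k - 1 < 0 by omega)]
    ring
  · have t1 : gchoose (n + k + (n + k)) (2 * (n + k) + 1) = 0 :=
      gchoose_eq_zero_of_lt (by omega) (by omega)
    have t2 : gchoose (n + k + (n + k)) (2 * (n + k)) = 1 := by
      rw [show n + k + (n + k) = 2 * (n + k) by ring]
      exact gchoose_self (by omega)
    have t3 : gchoose (n + k + (n + k) - 1) (2 * (n + k) - 1) = 1 := by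
      rw [show n + k + (n + k) - 1 = 2 * (n + k) - 1 by ring]
      exact gchoose_self (by omega)
    rw [t1, t2, t3]
    ring

lemma vseq_rec (k n : ℤ) (hk : 1 ≤ k) (hn : n ≤ -1) :
    vseq k n - vseq (k - 1) n + vseq k (n - 1) = 0 := by
  unfold vseq
  have h1 : Finset.Icc (n + 1) (n + k) = insert (n + k) (Finset.Icc (n + 1) (n + k - 1)) := by
    ext x
    simp only [Finset.mem_Icc, Finset.mem_insert]
    omega
  have h2 : Finset.Icc (n - 1 + 1) (n - 1 + k) = insert n (Finset.Icc (n + 1) (n + k - 1)) := by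
    ext x
    simp only [Finset.mem_Icc, Finset.mem_insert]
    omega
  have h3 : Finset.Icc (n + 1) (n + (k - 1)) = Finset.Icc (n + 1) (n + k - 1) := by
    rw [show n + (k - 1) = n + k - 1 by ring]
  rw [h1, h2, h3,
    Finset.sum_insert (by intro hmem; simp only [Finset.mem_Icc] at hmem; omega),
    Finset.sum_insert (by intro hmem; simp only [Finset.mem_Icc] at hmem; omega)]
  have hB : -(gchoose (n - 1 - n) n * gchoose (n - 1 + k + n) (2 * n + 1))
      + gchoose (n - 1 - n) (n - 1) * gchoose (n - 1 + k + n) (2 * n) = 0 := by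
    rw [gchoose_neg_right (show n < 0 by omega), gchoose_neg_right (show n - 1 < 0 by omega)]
    ring
  have hsum :
      (∑ i ∈ Finset.Icc (n + 1) (n + k - 1),
        (-(gchoose (n - i) i * gchoose (n + k + i) (2 * i + 1))
          + gchoose (n - i) (i - 1) * gchoose (n + k + i) (2 * i)))
      + (∑ i ∈ Finset.Icc (n + 1) (n + k - 1),
        (-(gchoose (n - 1 - i) i * gchoose (n - 1 + k + i) (2 * i + 1))
          + gchoose (n - 1 - i) (i - 1) * gchoose (n - 1 + k + i) (2 * i)))
      - (∑ i ∈ Finset.Icc (n + 1) (n + k - 1),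
        (-(gchoose (n - i) i * gchoose (n + (k - 1) + i) (2 * i + 1))
          + gchoose (n - i) (i - 1) * gchoose (n + (k - 1) + i) (2 * i)))
      = Dfun n k (n + 1) - Dfun n k (n + k) := by
    rw [← Finset.sum_add_distrib, ← Finset.sum_sub_distrib]
    have hkey : ∀ i ∈ Finset.Icc (n + 1) (n + k - 1),
        (-(gchoose (n - i) i * gchoose (n + k + i) (2 * i + 1))
          + gchoose (n - i) (i - 1) * gchoose (n + k + i) (2 * i))
        + (-(gchoose (n - 1 - i) i * gchoose (n - 1 + k + i) (2 * i + 1))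
          + gchoose (n - 1 - i) (i - 1) * gchoose (n - 1 + k + i) (2 * i))
        - (-(gchoose (n - i) i * gchoose (n + (k - 1) + i) (2 * i + 1))
          + gchoose (n - i) (i - 1) * gchoose (n + (k - 1) + i) (2 * i))
        = Dfun n k i - Dfun n k (i + 1) := fun i _ => key n k i
    rw [Finset.sum_congr rfl hkey]
    have hm : n + k - 1 = (n + 1) + ((k - 1).toNat : ℤ) - 1 := by omega
    have hm2 : (n + 1) + ((k - 1).toNat : ℤ) = n + k := by omega
    rw [hm, telescope (Dfun n k) (n + 1) (k - 1).toNat, hm2]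
  have hD1 : Dfun n k (n + 1) = 0 := by
    show gchoose (n - (n + 1)) (n + 1 - 1) * _ = 0
    rw [gchoose_neg_right (show n + 1 - 1 < 0 by omega)]
    ring
  have hA := boundary_top n k
  rw [hB]
  linarith [hsum, hA, hD1]

theorem stmt_12 (k h : ℤ) (hk : 1 ≤ k) (hh : h ≤ -1) : vseq k h = 0 := by
  have main : ∀ M : ℕ, ∀ k h : ℤ, 1 ≤ k → h ≤ -1 → h + k < (M : ℤ) → vseq k h = 0 := by
    intro M
    induction M with
    | zero => intro k h hk hh hM; exact vseq_zero_of_neg k h (by exact_mod_cast hM)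
    | succ d ih =>
      intro k h hk hh hM
      rcases lt_or_ge (h + k) 0 with hneg | hpos
      · exact vseq_zero_of_neg k h hneg
      · have hrec := vseq_rec k h hk hh
        have e1 : vseq (k - 1) h = 0 := by
          rcases eq_or_lt_of_le hk with he | hlt
          · rw [← he]
            norm_num [vseq_zero_left]
          · exact ih (k - 1) h (by omega) hh (by omega)
        have e2 : vseq k (h - 1) = 0 := ih k (h - 1) hk (by omega) (by omega)
        rw [e1, e2] at hrec
        linarith
  exact main (h + k + 1).toNat k h hk hh (by omega)
end

section
/- For all natural numbers n and l with l > n, the sum over i from 0 to l (using generalized binomial coefficients when n - i < 0) of [ -C(n-i, i) * C(l+i, 2i+1) + C(n-i, i-1) * C(l+i, 2i) ] equals 0; equivalently, the partial sum from i = 0 to n equals (-1)^{n+1} C(l, n+1) and the partial sum from i = n+1 to l equals (-1)^n C(l, n+1). -/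
open Finset

lemma gz1 (m k : ℤ) (hk : k < 0) : gchoose m k = 0 := by
  simp [gchoose, hk]

lemma gz2 (m k : ℤ) (h0 : 0 ≤ m) (h : m < k) : gchoose m k = 0 := by
  rw [gchoose, if_neg (by omega), if_neg (by omega)]
  norm_cast
  exact Nat.choose_eq_zero_of_lt (by omega)

lemma gneg1 (K : ℕ) : gchoose (-1) (K : ℤ) = (-1) ^ K := by
  rw [gchoose, if_neg (by omega), if_pos (by omega)]
  have h1 : ((K : ℤ) - (-1) - 1).toNat = K := by omega
  have h2 : ((K : ℤ)).toNat = K := by omega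
  rw [h1, h2, Nat.choose_self]
  simp

lemma gnat (a b : ℕ) : gchoose (a : ℤ) (b : ℤ) = (a.choose b : ℤ) := by
  rw [gchoose, if_neg (by omega), if_neg (by omega)]
  simp

lemma pascal (m k : ℤ) : gchoose m k = gchoose (m-1) k + gchoose (m-1) (k-1) := by
  rcases lt_trichotomy k 0 with hk | hk | hk
  · rw [gz1 _ _ hk, gz1 _ _ hk, gz1 _ _ (by omega)]; ring
  · subst hk
    rw [show (0:ℤ)-1 = -1 by ring, gz1 (m-1) (-1) (by omega)]
    rcases lt_or_ge m 0 with hm | hm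
    · rw [gchoose, if_neg (by omega), if_pos hm, gchoose, if_neg (by omega), if_pos (by omega)]
      simp
    · rcases lt_or_ge m 1 with hm1 | hm1
      · have : m = 0 := by omega
        subst this
        rw [gchoose, if_neg (by omega), if_neg (by omega), gchoose, if_neg (by omega), if_pos (by omega)]
        simp
      · rw [gchoose, if_neg (by omega), if_neg (by omega), gchoose, if_neg (by omega), if_neg (by omega)]
        simp
  · -- k ≥ 1
    obtain ⟨K, rfl⟩ : ∃ K : ℕ, k = (K : ℤ) + 1 := ⟨(k-1).toNat, by omega⟩
    rcases lt_or_ge m 0 with hm | hm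
    · -- m < 0, m - 1 < 0
      obtain ⟨M, rfl⟩ : ∃ M : ℕ, m = -((M : ℤ) + 1) := ⟨(-m-1).toNat, by omega⟩
      rw [gchoose, if_neg (by omega), if_pos hm, gchoose, if_neg (by omega), if_pos (by omega),
        gchoose, if_neg (by omega), if_pos (by omega)]
      have e1 : ((K:ℤ) + 1 - -((M:ℤ)+1) - 1).toNat = K + M + 1 := by omega
      have e2 : (((K:ℤ) + 1)).toNat = K + 1 := by omega
      have e3 : ((K:ℤ) + 1 - (-((M:ℤ)+1) - 1) - 1).toNat = K + M + 2 := by omega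
      have e4 : ((K:ℤ) + 1 - 1).toNat = K := by omega
      have e5 : ((K:ℤ) + 1 - 1 - (-((M:ℤ)+1) - 1) - 1).toNat = K + M + 1 := by omega
      rw [e1, e2, e3, e4, e5]
      have : (K + M + 2).choose (K+1) = (K+M+1).choose K + (K+M+1).choose (K+1) :=
        Nat.choose_succ_succ (K+M+1) K
      rw [this]
      push_cast
      ring
    · rcases lt_or_ge m 1 with hm1 | hm1
      · have : m = 0 := by omega
        subst this
        rw [gchoose, if_neg (by omega), if_neg (by omega), gchoose, if_neg (by omega), if_pos (by omega),
          gchoose, if_neg (by omega), if_pos (by omega)]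
        have e1 : (((K:ℤ)+1)).toNat = K + 1 := by omega
        have e2 : ((K:ℤ) + 1 - (0 - 1) - 1).toNat = K + 1 := by omega
        have e3 : ((K:ℤ) + 1 - 1).toNat = K := by omega
        have e4 : ((K:ℤ) + 1 - 1 - (0-1) - 1).toNat = K := by omega
        rw [e1, e2, e3, e4, Nat.choose_self, Nat.choose_self, Nat.choose_eq_zero_of_lt (by omega)]
        push_cast
        ring
      · obtain ⟨M, rfl⟩ : ∃ M : ℕ, m = (M : ℤ) + 1 := ⟨(m-1).toNat, by omega⟩
        rw [gchoose, if_neg (by omega), if_neg (by omega), gchoose, if_neg (by omega), if_neg (by omega),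
          gchoose, if_neg (by omega), if_neg (by omega)]
        have e1 : (((M:ℤ)+1)).toNat = M + 1 := by omega
        have e2 : (((K:ℤ)+1)).toNat = K + 1 := by omega
        have e3 : (((M:ℤ)+1) - 1).toNat = M := by omega
        have e4 : (((K:ℤ)+1) - 1).toNat = K := by omega
        rw [e1, e2, e3, e4]
        rw [Nat.choose_succ_succ (M) K]
        push_cast
        ring


lemma pascal' (m k : ℤ) : gchoose (m+1) k = gchoose m k + gchoose m (k-1) := by
  have := pascal (m+1) k
  simpa using this

/-- summand -/
def Af (n l j i : ℤ) : ℤ :=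
  -(gchoose (n-i) i * gchoose (l+i) (2*i+1-j)) + gchoose (n-i) (i-1) * gchoose (l+i) (2*i-j)

/-- certificate function -/
def Hf (n j x : ℤ) : ℤ := -(gchoose (n-x) (x-1) * gchoose x (2*x-j))

lemma T1 (n l j i : ℤ) : Af n (l+1) j i = Af n l j i + Af n l (j+1) i := by
  unfold Af
  rw [show l+1+i = (l+i)+1 by ring, pascal' (l+i) (2*i+1-j), pascal' (l+i) (2*i-j),
    show 2*i+1-j-1 = 2*i-j by ring, show 2*i-j-1 = 2*i-(j+1) by ring,
    show 2*i+1-j = 2*i+1-j by rfl]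
  have e : 2*i+1-(j+1) = 2*i-j := by ring
  rw [e]
  ring

lemma T2 (n j i : ℤ) : Af n 0 j i + Af (n-1) 0 (j-1) i = Hf n j (i+1) - Hf n j i := by
  unfold Af Hf
  rw [show (0:ℤ)+i = i by ring]
  rw [pascal (n-i) i]
  have e1 : n - i - 1 = n - (i+1) := by ring
  have e2 : (i+1) - 1 = i := by ring
  have e3 : 2*(i+1)-j = (2*i+2-j) := by ring
  rw [e1, e2, e3, pascal' i (2*i+2-j), show 2*i+2-j-1 = 2*i+1-j by ring]
  have e4 : n - 1 - i = n - (i+1) := by ring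
  have e5 : 2*i+1-(j-1) = 2*i+2-j := by ring
  have e6 : 2*i-(j-1) = 2*i+1-j := by ring
  rw [e4, e5, e6]
  ring

/-- range sums -/
def SS (N : ℕ) (n l j : ℤ) : ℤ := ∑ i ∈ Finset.range N, Af n l j (i : ℤ)

lemma Af_zero_of_neg (n j i : ℤ) (hi : 0 ≤ i) (hj : j < 0) : Af n 0 j i = 0 := by
  unfold Af
  rw [show (0:ℤ)+i = i by ring, gz2 i (2*i+1-j) hi (by omega), gz2 i (2*i-j) hi (by omega)]
  ring

lemma head0 : ∀ (n : ℕ) (j : ℤ), SS (n+1) (n:ℤ) 0 j = (-1)^(n+1) * gchoose 0 ((n:ℤ)+1-j) := by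
  intro n
  induction n with
  | zero =>
    intro j
    rw [SS, Finset.sum_range_one]
    unfold Af
    norm_num
    rw [gz1 0 (-1) (by omega), show gchoose 0 0 = 1 by simp [gchoose]]
    ring_nf
  | succ n ih =>
    intro j
    have termwise : ∀ i : ℕ, Af ((n:ℤ)+1) 0 j (i:ℤ) + Af (n:ℤ) 0 (j-1) (i:ℤ)
        = Hf ((n:ℤ)+1) j ((i:ℤ)+1) - Hf ((n:ℤ)+1) j (i:ℤ) := by
      intro i
      have := T2 ((n:ℤ)+1) j (i:ℤ)
      rw [show (n:ℤ)+1-1 = (n:ℤ) by ring] at this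
      exact this
    have sum_eq : SS (n+2) ((n:ℤ)+1) 0 j + SS (n+2) (n:ℤ) 0 (j-1)
        = Hf ((n:ℤ)+1) j ((n:ℤ)+2) - Hf ((n:ℤ)+1) j 0 := by
      rw [SS, SS, ← Finset.sum_add_distrib]
      have step : ∀ i ∈ Finset.range (n+2), Af ((n:ℤ)+1) 0 j (i:ℤ) + Af (n:ℤ) 0 (j-1) (i:ℤ)
          = (fun k : ℕ => Hf ((n:ℤ)+1) j (k:ℤ)) (i+1) - (fun k : ℕ => Hf ((n:ℤ)+1) j (k:ℤ)) i := by
        intro i _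
        simp only
        rw [termwise i]
        push_cast
        ring_nf
      rw [Finset.sum_congr rfl step, Finset.sum_range_sub (fun k : ℕ => Hf ((n:ℤ)+1) j (k:ℤ)) (n+2)]
      push_cast
      ring_nf
    have h0 : Hf ((n:ℤ)+1) j 0 = 0 := by
      unfold Hf
      rw [gz1 _ (0-1) (by omega)]
      ring
    have hend : Hf ((n:ℤ)+1) j ((n:ℤ)+2)
        = -((-1)^(n+1) * gchoose ((n:ℤ)+2) (2*((n:ℤ)+2)-j)) := by
      unfold Hf
      rw [show (n:ℤ)+1-((n:ℤ)+2) = -1 by ring, show (n:ℤ)+2-1 = ((n+1:ℕ):ℤ) by push_cast; ring]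
      rw [gneg1 (n+1)]
    have hsplit : SS (n+2) (n:ℤ) 0 (j-1) = SS (n+1) (n:ℤ) 0 (j-1) + Af (n:ℤ) 0 (j-1) ((n:ℤ)+1) := by
      rw [SS, SS, Finset.sum_range_succ]
      push_cast
      ring_nf
    have hA : Af (n:ℤ) 0 (j-1) ((n:ℤ)+1)
        = -((-1)^(n+1) * gchoose ((n:ℤ)+1) (2*(n:ℤ)+4-j)) + (-1)^n * gchoose ((n:ℤ)+1) (2*(n:ℤ)+3-j) := by
      unfold Af
      rw [show (n:ℤ)-((n:ℤ)+1) = -1 by ring, show (0:ℤ)+((n:ℤ)+1) = (n:ℤ)+1 by ring,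
        show ((n:ℤ)+1)-1 = ((n:ℕ):ℤ) by push_cast; ring,
        show (n:ℤ)+1 = ((n+1:ℕ):ℤ) by push_cast; ring]
      rw [gneg1 (n+1), gneg1 n]
      push_cast
      rw [show 2*((n:ℤ)+1)+1-(j-1) = 2*(n:ℤ)+4-j by ring, show 2*((n:ℤ)+1)-(j-1) = 2*(n:ℤ)+3-j by ring]
    have hP : gchoose ((n:ℤ)+2) (2*((n:ℤ)+2)-j)
        = gchoose ((n:ℤ)+1) (2*(n:ℤ)+4-j) + gchoose ((n:ℤ)+1) (2*(n:ℤ)+3-j) := by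
      have := pascal ((n:ℤ)+2) (2*((n:ℤ)+2)-j)
      rw [show (n:ℤ)+2-1 = (n:ℤ)+1 by ring, show 2*((n:ℤ)+2)-j = 2*(n:ℤ)+4-j by ring,
        show 2*(n:ℤ)+4-j-1 = 2*(n:ℤ)+3-j by ring] at this
      exact this
    have ihj := ih (j-1)
    rw [show (n:ℤ)+1-(j-1) = (n:ℤ)+2-j by ring] at ihj
    have goal1 : SS (n+2) ((n:ℤ)+1) 0 j
        = Hf ((n:ℤ)+1) j ((n:ℤ)+2) - Hf ((n:ℤ)+1) j 0 - SS (n+2) (n:ℤ) 0 (j-1) := by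
      linarith [sum_eq]
    rw [show ((n+1:ℕ):ℤ) = (n:ℤ)+1 by push_cast; ring, show n+1+1 = n+2 from rfl]
    rw [goal1, h0, hend, hsplit, hA, ihj, hP]
    push_cast
    ring

lemma headl : ∀ (l : ℕ) (n : ℕ) (j : ℤ), SS (n+1) (n:ℤ) (l:ℤ) j = (-1)^(n+1) * gchoose (l:ℤ) ((n:ℤ)+1-j) := by
  intro l
  induction l with
  | zero => intro n j; exact_mod_cast head0 n j
  | succ l ih =>
    intro n j
    have hsum : SS (n+1) (n:ℤ) ((l:ℤ)+1) j = SS (n+1) (n:ℤ) (l:ℤ) j + SS (n+1) (n:ℤ) (l:ℤ) (j+1) := by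
      rw [SS, SS, SS, ← Finset.sum_add_distrib]
      exact Finset.sum_congr rfl (fun i _ => T1 (n:ℤ) (l:ℤ) j (i:ℤ))
    rw [show ((l+1:ℕ):ℤ) = (l:ℤ)+1 by push_cast; ring, hsum, ih n j, ih n (j+1)]
    have hP : gchoose ((l:ℤ)+1) ((n:ℤ)+1-j) = gchoose (l:ℤ) ((n:ℤ)+1-j) + gchoose (l:ℤ) ((n:ℤ)+1-(j+1)) := by
      have := pascal' (l:ℤ) ((n:ℤ)+1-j)
      rw [show (n:ℤ)+1-j-1 = (n:ℤ)+1-(j+1) by ring] at this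
      exact this
    rw [hP]
    ring

lemma full0 : ∀ (t : ℕ) (j n : ℤ) (M : ℕ), j < (t:ℤ) → j < (M:ℤ) → SS M n 0 j = 0 := by
  intro t
  induction t with
  | zero =>
    intro j n M hjt _
    rw [SS]
    exact Finset.sum_eq_zero (fun i _ => Af_zero_of_neg n j (i:ℤ) (by positivity) (by exact_mod_cast hjt))
  | succ t ih =>
    intro j n M hjt hjM
    rcases lt_or_ge j 0 with hj | hj
    · rw [SS]
      exact Finset.sum_eq_zero (fun i _ => Af_zero_of_neg n j (i:ℤ) (by positivity) hj)
    · have termwise : ∀ i : ℕ, Af n 0 j (i:ℤ) + Af (n-1) 0 (j-1) (i:ℤ)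
          = Hf n j ((i:ℤ)+1) - Hf n j (i:ℤ) := fun i => T2 n j (i:ℤ)
      have sum_eq : SS M n 0 j + SS M (n-1) 0 (j-1) = Hf n j (M:ℤ) - Hf n j 0 := by
        rw [SS, SS, ← Finset.sum_add_distrib]
        have step : ∀ i ∈ Finset.range M, Af n 0 j (i:ℤ) + Af (n-1) 0 (j-1) (i:ℤ)
            = (fun k : ℕ => Hf n j (k:ℤ)) (i+1) - (fun k : ℕ => Hf n j (k:ℤ)) i := by
          intro i _
          simp only
          rw [termwise i]
          push_cast
          ring_nf
        rw [Finset.sum_congr rfl step, Finset.sum_range_sub (fun k : ℕ => Hf n j (k:ℤ)) M]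
        norm_num
      have h0 : Hf n j 0 = 0 := by
        unfold Hf
        rw [gz1 _ (0-1) (by omega)]
        ring
      have hM : Hf n j (M:ℤ) = 0 := by
        unfold Hf
        rw [gz2 (M:ℤ) (2*(M:ℤ)-j) (by positivity) (by omega)]
        ring
      have ihc := ih (j-1) (n-1) M (by omega) (by omega)
      rw [h0, hM, ihc] at sum_eq
      linarith

lemma fullg : ∀ (l : ℕ) (j n : ℤ) (M : ℕ), 0 ≤ j → (l:ℤ) + j < (M:ℤ) → SS M n (l:ℤ) j = 0 := by
  intro l
  induction l with
  | zero =>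
    intro j n M _ hM
    have : ((0:ℕ):ℤ) = 0 := rfl
    rw [this]
    exact full0 (j.toNat+1) j n M (by omega) (by omega)
  | succ l ih =>
    intro j n M hj hM
    rw [show ((l+1:ℕ):ℤ) = (l:ℤ)+1 by push_cast; ring]
    have hsum : SS M n ((l:ℤ)+1) j = SS M n (l:ℤ) j + SS M n (l:ℤ) (j+1) := by
      rw [SS, SS, SS, ← Finset.sum_add_distrib]
      exact Finset.sum_congr rfl (fun i _ => T1 n (l:ℤ) j (i:ℤ))
    rw [hsum, ih j n M hj (by push_cast at hM ⊢; omega), ih (j+1) n M (by omega) (by push_cast at hM ⊢; omega)]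
    ring

lemma icc_to_range (f : ℤ → ℤ) (m : ℕ) :
    ∑ i ∈ Finset.Icc (0:ℤ) (m:ℤ), f i = ∑ i ∈ Finset.range (m+1), f (i:ℤ) := by
  induction m with
  | zero => simp
  | succ m ih =>
    have hins : Finset.Icc (0:ℤ) ((m:ℤ)+1) = insert ((m:ℤ)+1) (Finset.Icc (0:ℤ) (m:ℤ)) := by
      ext x
      simp only [Finset.mem_Icc, Finset.mem_insert]
      omega
    rw [show ((m+1:ℕ):ℤ) = (m:ℤ)+1 by push_cast; ring, hins, Finset.sum_insert (by simp)]
    rw [Finset.sum_range_succ (fun i : ℕ => f (i:ℤ)) (m+1)]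
    rw [ih, show ((m+1:ℕ):ℤ) = (m:ℤ)+1 by push_cast; ring]
    ring

theorem aux_stmt_19 (n l : ℕ) (h : n < l) :
    (∑ i ∈ Finset.Icc (0 : ℤ) l,
        (-(gchoose ((n : ℤ) - i) i * gchoose ((l : ℤ) + i) (2 * i + 1))
          + gchoose ((n : ℤ) - i) (i - 1) * gchoose ((l : ℤ) + i) (2 * i)) = 0)
    ∧ (∑ i ∈ Finset.Icc (0 : ℤ) n,
        (-(gchoose ((n : ℤ) - i) i * gchoose ((l : ℤ) + i) (2 * i + 1))
          + gchoose ((n : ℤ) - i) (i - 1) * gchoose ((l : ℤ) + i) (2 * i))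
        = (-1) ^ (n + 1) * (l.choose (n + 1) : ℤ))
    ∧ (∑ i ∈ Finset.Icc ((n : ℤ) + 1) l,
        (-(gchoose ((n : ℤ) - i) i * gchoose ((l : ℤ) + i) (2 * i + 1))
          + gchoose ((n : ℤ) - i) (i - 1) * gchoose ((l : ℤ) + i) (2 * i))
        = (-1) ^ n * (l.choose (n + 1) : ℤ)) := by
  have hF : ∀ i : ℤ, (-(gchoose ((n:ℤ)-i) i * gchoose ((l:ℤ)+i) (2*i+1))
      + gchoose ((n:ℤ)-i) (i-1) * gchoose ((l:ℤ)+i) (2*i)) = Af (n:ℤ) (l:ℤ) 0 i := by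
    intro i
    unfold Af
    norm_num
  have P1 : ∑ i ∈ Finset.Icc (0 : ℤ) (l:ℤ),
      (-(gchoose ((n:ℤ)-i) i * gchoose ((l:ℤ)+i) (2*i+1))
        + gchoose ((n:ℤ)-i) (i-1) * gchoose ((l:ℤ)+i) (2*i)) = 0 := by
    rw [Finset.sum_congr rfl (fun i _ => hF i), icc_to_range (Af (n:ℤ) (l:ℤ) 0) l]
    exact fullg l 0 (n:ℤ) (l+1) (by omega) (by push_cast; omega)
  have P2 : ∑ i ∈ Finset.Icc (0 : ℤ) (n:ℤ),
      (-(gchoose ((n:ℤ)-i) i * gchoose ((l:ℤ)+i) (2*i+1))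
        + gchoose ((n:ℤ)-i) (i-1) * gchoose ((l:ℤ)+i) (2*i))
      = (-1) ^ (n + 1) * (l.choose (n + 1) : ℤ) := by
    rw [Finset.sum_congr rfl (fun i _ => hF i), icc_to_range (Af (n:ℤ) (l:ℤ) 0) n]
    have := headl l n 0
    rw [show (n:ℤ)+1-0 = ((n+1:ℕ):ℤ) by push_cast; ring, gnat l (n+1)] at this
    exact this
  refine ⟨P1, P2, ?_⟩
  have hsplit : Finset.Icc (0:ℤ) (l:ℤ)
      = Finset.Icc (0:ℤ) (n:ℤ) ∪ Finset.Icc ((n:ℤ)+1) (l:ℤ) := by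
    ext x
    simp only [Finset.mem_Icc, Finset.mem_union]
    omega
  have hdisj : Disjoint (Finset.Icc (0:ℤ) (n:ℤ)) (Finset.Icc ((n:ℤ)+1) (l:ℤ)) := by
    rw [Finset.disjoint_left]
    intro x hx hx'
    simp only [Finset.mem_Icc] at hx hx'
    omega
  rw [hsplit, Finset.sum_union hdisj, P2] at P1
  rw [show ((-1:ℤ))^n * (l.choose (n+1) : ℤ) = -((-1)^(n+1) * (l.choose (n+1) : ℤ)) by ring]
  linarith


theorem stmt_19 (n l : ℕ) (h : n < l) :
    (∑ i ∈ Finset.Icc (0 : ℤ) l,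
        (-(gchoose ((n : ℤ) - i) i * gchoose ((l : ℤ) + i) (2 * i + 1))
          + gchoose ((n : ℤ) - i) (i - 1) * gchoose ((l : ℤ) + i) (2 * i)) = 0)
    ∧ (∑ i ∈ Finset.Icc (0 : ℤ) n,
        (-(gchoose ((n : ℤ) - i) i * gchoose ((l : ℤ) + i) (2 * i + 1))
          + gchoose ((n : ℤ) - i) (i - 1) * gchoose ((l : ℤ) + i) (2 * i))
        = (-1) ^ (n + 1) * (l.choose (n + 1) : ℤ))
    ∧ (∑ i ∈ Finset.Icc ((n : ℤ) + 1) l,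
        (-(gchoose ((n : ℤ) - i) i * gchoose ((l : ℤ) + i) (2 * i + 1))
          + gchoose ((n : ℤ) - i) (i - 1) * gchoose ((l : ℤ) + i) (2 * i))
        = (-1) ^ n * (l.choose (n + 1) : ℤ)) := by
  exact aux_stmt_19 n l h
end
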